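/- Let A ∈ ℂ^{n×n}, ν = ind A, and let u ≥ ν be a nonnegative integer. Then for any nonzero polynomial φ(λ) = λ^t(λ^q + p₁λ^{q−1} + ⋯ + p_q) (with nonnegative integers t, q, coefficients p₁,…,p_q ∈ ℂ, p_q ≠ 0) annihilating A^u, the matrix Z = h(A^u), where h(λ) = p_q^{−1}(λ^q + p₁λ^{q−1} + ⋯ + p_q), is the eigenprojection of A: Z² = Z, the range of Z equals the null space of A^ν, and the null space of Z equals the range of A^ν. -/

import Mathlib

open Matrix Polynomial

private lemma mulVecLin_pow' {n : ℕ} (A : Matrix (Fin n) (Fin n) ℂ) (k : ℕ) :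
    (A ^ k).mulVecLin = (A.mulVecLin) ^ k := by
  induction k with
  | zero => rw [pow_zero, pow_zero, Matrix.mulVecLin_one]; rfl
  | succ k ih =>
    rw [pow_succ, pow_succ, Matrix.mulVecLin_mul, ih]
    rfl

/-- **Theorem 1.** Let `ν = ind A` and `u ≥ ν`. Then for any nonzero annihilating
polynomial `φ(λ) = λ^t · ψ(λ)` of `A ^ u`, where `ψ(λ) = λ^q + p₁λ^{q-1} + ⋯ + p_q`
is monic with nonzero constant term `p_q = ψ.coeff 0`, the matrix `Z = h(A ^ u)`,
with `h(λ) = p_q⁻¹ · ψ(λ)`, is the eigenprojection of `A`: it is idempotent, its range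
is the null space of `A ^ ν`, and its null space is the range of `A ^ ν`. -/
theorem eigenprojection_of_annihilating_poly {n : ℕ} (A : Matrix (Fin n) (Fin n) ℂ)
    (ν u : ℕ) (hν : IsLeast {k : ℕ | (A ^ (k + 1)).rank = (A ^ k).rank} ν)
    (hu : ν ≤ u)
    (t : ℕ) (ψ : Polynomial ℂ) (hmonic : ψ.Monic) (hconst : ψ.coeff 0 ≠ 0)
    (hann : Polynomial.aeval (A ^ u) (Polynomial.X ^ t * ψ) = 0)
    (Z : Matrix (Fin n) (Fin n) ℂ)
    (hZ : Z = Polynomial.aeval (A ^ u) (Polynomial.C (ψ.coeff 0)⁻¹ * ψ)) :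
    Z * Z = Z ∧
    LinearMap.range Z.mulVecLin = LinearMap.ker (A ^ ν).mulVecLin ∧
    LinearMap.ker Z.mulVecLin = LinearMap.range (A ^ ν).mulVecLin := by
  classical
  set f : Module.End ℂ (Fin n → ℂ) := A.mulVecLin with hf
  set c : ℂ := ψ.coeff 0 with hc
  set B : Matrix (Fin n) (Fin n) ℂ := A ^ u with hB
  set W : Matrix (Fin n) (Fin n) ℂ := Polynomial.aeval B ψ with hW
  -- kernels of powers are monotone
  have kmono : ∀ a m : ℕ, LinearMap.ker (f ^ a) ≤ LinearMap.ker (f ^ (m + a)) := by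
    intro a m
    rw [pow_add]
    exact LinearMap.ker_le_ker_comp _ _
  -- rank equality at ν gives kernel equality at ν
  have hker1 : LinearMap.ker (f ^ ν) = LinearMap.ker (f ^ (ν + 1)) := by
    have hle : LinearMap.ker (f ^ ν) ≤ LinearMap.ker (f ^ (ν + 1)) := by
      simpa [add_comm] using kmono ν 1
    have hrank : (A ^ (ν + 1)).rank = (A ^ ν).rank := hν.1
    have hfr : ∀ k : ℕ, Module.finrank ℂ (LinearMap.range (f ^ k))
        + Module.finrank ℂ (LinearMap.ker (f ^ k)) = n := by
      intro k
      have := LinearMap.finrank_range_add_finrank_ker (f ^ k)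
      simpa using this
    have h1 := hfr ν
    have h2 := hfr (ν + 1)
    have hr : Module.finrank ℂ (LinearMap.range (f ^ (ν + 1)))
        = Module.finrank ℂ (LinearMap.range (f ^ ν)) := by
      have e1 : (A ^ (ν+1)).rank = Module.finrank ℂ (LinearMap.range (f ^ (ν+1))) := by
        rw [Matrix.rank, mulVecLin_pow']
      have e2 : (A ^ ν).rank = Module.finrank ℂ (LinearMap.range (f ^ ν)) := by
        rw [Matrix.rank, mulVecLin_pow']
      rw [← e1, ← e2, hrank]
    have hkfr : Module.finrank ℂ (LinearMap.ker (f ^ ν))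
        = Module.finrank ℂ (LinearMap.ker (f ^ (ν + 1))) := by omega
    exact Submodule.eq_of_le_of_finrank_eq hle hkfr
  have hkerk : ∀ k, ν ≤ k → LinearMap.ker (f ^ k) = LinearMap.ker (f ^ ν) := by
    intro k hk
    obtain ⟨m, rfl⟩ := Nat.exists_eq_add_of_le hk
    exact (Module.End.ker_pow_constant hker1 m).symm
  set K : Submodule ℂ (Fin n → ℂ) := LinearMap.ker ((A ^ ν).mulVecLin) with hK
  set R : Submodule ℂ (Fin n → ℂ) := LinearMap.range ((A ^ ν).mulVecLin) with hR
  have hKf : K = LinearMap.ker (f ^ ν) := by rw [hK, mulVecLin_pow']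
  have hRf : R = LinearMap.range (f ^ ν) := by rw [hR, mulVecLin_pow']
  -- disjointness
  have hdisj : K ⊓ R = ⊥ := by
    rw [hKf, hRf]
    ext x
    simp only [Submodule.mem_inf, LinearMap.mem_ker, LinearMap.mem_range,
      Submodule.mem_bot]
    constructor
    · rintro ⟨hx0, y, rfl⟩
      have : y ∈ LinearMap.ker (f ^ (ν + ν)) := by
        rw [LinearMap.mem_ker, pow_add]
        exact hx0
      rw [hkerk (ν + ν) (Nat.le_add_right _ _)] at this
      exact this
    · rintro rfl
      exact ⟨by simp, 0, by simp⟩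
  -- codisjointness
  have hsup : K ⊔ R = ⊤ := by
    apply Submodule.eq_top_of_finrank_eq
    have h1 := Submodule.finrank_sup_add_finrank_inf_eq K R
    rw [hdisj] at h1
    have h2 : Module.finrank ℂ R + Module.finrank ℂ K = Module.finrank ℂ (Fin n → ℂ) :=
      LinearMap.finrank_range_add_finrank_ker ((A ^ ν).mulVecLin)
    simp only [finrank_bot, add_zero] at h1
    omega
  -- action of W on K
  have hBK : ∀ x ∈ K, B.mulVec x = 0 := by
    intro x hx
    have hx' : x ∈ LinearMap.ker (f ^ u) := by
      rw [hkerk u hu, ← hKf]; exact hx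
    have : (A ^ u).mulVecLin x = 0 := by rw [mulVecLin_pow']; exact hx'
    simpa [Matrix.mulVecLin_apply] using this
  have hWK : ∀ x ∈ K, W.mulVec x = c • x := by
    intro x hx
    have hψ : ψ = X * ψ.divX + C c := (Polynomial.X_mul_divX_add ψ).symm
    have hWeq : W = Polynomial.aeval B ψ.divX * B + c • 1 := by
      rw [hW]
      conv_lhs => rw [hψ]
      rw [map_add, mul_comm X ψ.divX, _root_.map_mul, Polynomial.aeval_X, Polynomial.aeval_C,
        Algebra.algebraMap_eq_smul_one (R := ℂ) (A := Matrix (Fin n) (Fin n) ℂ)]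
    rw [hWeq, Matrix.add_mulVec, ← Matrix.mulVec_mulVec, hBK x hx, Matrix.mulVec_zero,
      zero_add, Matrix.smul_mulVec, Matrix.one_mulVec]
  -- action of W on R
  have hcommA : A ^ ν * W = W * A ^ ν := by
    have hW' : W = Polynomial.aeval A (ψ.comp (X ^ u)) := by
      rw [Polynomial.aeval_comp, Polynomial.aeval_X_pow, hW]
    have hA' : A ^ ν = Polynomial.aeval A (X ^ ν) := (Polynomial.aeval_X_pow (R := ℂ) A).symm
    rw [hW', hA', ← _root_.map_mul, ← _root_.map_mul, mul_comm]
  have hWR : ∀ x ∈ R, W.mulVec x = 0 := by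
    intro x hx
    rw [hRf, LinearMap.mem_range] at hx
    obtain ⟨y, rfl⟩ := hx
    have hy : (f ^ ν) y = (A ^ ν).mulVec y := by rw [← mulVecLin_pow']; rfl
    set w : Fin n → ℂ := W.mulVec ((f ^ ν) y) with hw
    -- w ∈ K
    have hwK : w ∈ K := by
      have hzero : A ^ (u * t) * W = 0 := by
        have h3 : Polynomial.aeval B (X ^ t * ψ) = B ^ t * W := by
          rw [_root_.map_mul, Polynomial.aeval_X_pow, hW]
        rw [pow_mul, ← hB, ← h3]
        exact hann
      have hwker : w ∈ LinearMap.ker (f ^ (u * t)) := by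
        rw [LinearMap.mem_ker, ← mulVecLin_pow', Matrix.mulVecLin_apply, hw,
          Matrix.mulVec_mulVec, hzero, Matrix.zero_mulVec]
      rw [hKf]
      have h1 : LinearMap.ker (f ^ (u * t)) ≤ LinearMap.ker (f ^ (ν + u * t)) :=
        kmono (u * t) ν
      have h2 : LinearMap.ker (f ^ (ν + u * t)) = LinearMap.ker (f ^ ν) :=
        hkerk _ (Nat.le_add_right _ _)
      exact h2 ▸ h1 hwker
    -- w ∈ R
    have hwR : w ∈ R := by
      rw [hRf, LinearMap.mem_range]
      refine ⟨W.mulVec y, ?_⟩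
      have : (f ^ ν) (W.mulVec y) = (A ^ ν).mulVec (W.mulVec y) := by
        rw [← mulVecLin_pow']; rfl
      rw [this, hw, hy, Matrix.mulVec_mulVec, Matrix.mulVec_mulVec, hcommA]
    have : w ∈ K ⊓ R := ⟨hwK, hwR⟩
    rw [hdisj, Submodule.mem_bot] at this
    exact this
  -- Z in terms of W
  have hZW : Z = c⁻¹ • W := by
    rw [hZ, _root_.map_mul, Polynomial.aeval_C, Algebra.algebraMap_eq_smul_one (R := ℂ) (A := Matrix (Fin n) (Fin n) ℂ), smul_mul_assoc,
      one_mul, hW]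
  have hZK : ∀ x ∈ K, Z.mulVec x = x := by
    intro x hx
    rw [hZW, Matrix.smul_mulVec, hWK x hx, smul_smul, inv_mul_cancel₀ hconst, one_smul]
  have hZR : ∀ x ∈ R, Z.mulVec x = 0 := by
    intro x hx
    rw [hZW, Matrix.smul_mulVec, hWR x hx, smul_zero]
  -- decomposition
  have hdecomp : ∀ x : Fin n → ℂ, ∃ k ∈ K, ∃ r ∈ R, k + r = x := by
    intro x
    obtain ⟨k, r, hk, hr, h⟩ := Submodule.codisjoint_iff_exists_add_eq.mp (codisjoint_iff.mpr hsup) x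
    exact ⟨k, hk, r, hr, h⟩
  have hZmem : ∀ x : Fin n → ℂ, Z.mulVec x ∈ K ∧ Z.mulVec (Z.mulVec x) = Z.mulVec x := by
    intro x
    obtain ⟨k, hk, r, hr, rfl⟩ := hdecomp x
    have h1 : Z.mulVec (k + r) = k := by
      rw [Matrix.mulVec_add, hZK k hk, hZR r hr, add_zero]
    rw [h1]
    exact ⟨hk, hZK k hk⟩
  refine ⟨?_, ?_, ?_⟩
  · apply Matrix.toLin'.injective
    apply LinearMap.ext
    intro x
    rw [Matrix.toLin'_apply, Matrix.toLin'_apply, ← Matrix.mulVec_mulVec]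
    exact (hZmem x).2
  · ext w
    rw [LinearMap.mem_range]
    constructor
    · rintro ⟨x, rfl⟩
      exact (hZmem x).1
    · intro hw
      exact ⟨w, hZK w hw⟩
  · ext x
    rw [LinearMap.mem_ker]
    constructor
    · intro hx
      obtain ⟨k, hk, r, hr, rfl⟩ := hdecomp x
      have h1 : Z.mulVecLin (k + r) = k := by
        simp only [Matrix.mulVecLin_apply]
        rw [Matrix.mulVec_add, hZK k hk, hZR r hr, add_zero]
      rw [h1] at hx
      rw [hx, zero_add]
      exact hr
    · intro hx
      simpa [Matrix.mulVecLin_apply] using hZR x hx
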